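/- Let H(t), t ∈ ℝ, be the Laplacian on a compact interval [0,ℓ₁] ∪ [0,ℓ₂] glued at an interior point v with the δ-condition of strength t (continuity at v and jump of derivatives equal to t·f(v)). Then −t is an eigenvalue of the 1×1 two-sided Dirichlet-to-Neumann map Λ_∞(c) (for c not in the Dirichlet spectrum at v) if and only if c is an eigenvalue of H(t), with equal multiplicities. -/

import Mathlib

private lemma lin_deriv (k p x : ℝ) : HasDerivAt (fun y => k * (y - p)) k x := by
  simpa using ((hasDerivAt_id x).sub_const p).const_mul k

private lemma cos_deriv (k c p : ℝ) (x : ℝ) :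
    HasDerivAt (fun y => c * Real.cos (k * (y - p))) (-(c * k) * Real.sin (k * (x - p))) x := by
  have h := (Real.hasDerivAt_cos (k * (x - p))).comp x (lin_deriv k p x)
  have := h.const_mul c
  refine this.congr_deriv ?_
  ring

private lemma sin_deriv (k c p : ℝ) (x : ℝ) :
    HasDerivAt (fun y => -(c * k) * Real.sin (k * (y - p)))
      (-(k ^ 2) * (c * Real.cos (k * (x - p)))) x := by
  have h := (Real.hasDerivAt_sin (k * (x - p))).comp x (lin_deriv k p x)
  have := h.const_mul (-(c * k))
  refine this.congr_deriv ?_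
  ring

/-- Energy uniqueness: a solution pair vanishing at one point vanishes everywhere. -/
private lemma uniq (k : ℝ) (hk : 0 < k) (u d : ℝ → ℝ)
    (hu : ∀ x, HasDerivAt u (d x) x) (hd : ∀ x, HasDerivAt d (-(k ^ 2) * u x) x)
    (x₀ : ℝ) (h0 : u x₀ = 0) (h1 : d x₀ = 0) : ∀ x, u x = 0 := by
  have hE : ∀ x, HasDerivAt (fun y => k ^ 2 * u y ^ 2 + d y ^ 2) 0 x := by
    intro x
    have h := (((hu x).pow 2).const_mul (k ^ 2)).add ((hd x).pow 2)
    refine h.congr_deriv ?_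
    push_cast
    ring
  have hconst : ∀ x y : ℝ, k ^ 2 * u x ^ 2 + d x ^ 2 = k ^ 2 * u y ^ 2 + d y ^ 2 :=
    is_const_of_deriv_eq_zero (fun x => (hE x).differentiableAt)
      (fun x => (hE x).deriv)
  intro x
  have hx := hconst x x₀
  rw [h0, h1] at hx
  have h3 : k ^ 2 * u x ^ 2 = 0 := by
    nlinarith [sq_nonneg (d x), mul_nonneg (sq_nonneg k) (sq_nonneg (u x))]
  rcases mul_eq_zero.mp h3 with h | h
  · exact absurd h (by positivity)
  · exact pow_eq_zero_iff (n := 2) (by norm_num) |>.mp h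

/-- If the derivative vanishes at `p` and the value at `q`, with `cos (k(q-p)) ≠ 0`,
then the solution is identically 0. -/
private lemma uniq2 (k : ℝ) (hk : 0 < k) (u d : ℝ → ℝ)
    (hu : ∀ x, HasDerivAt u (d x) x) (hd : ∀ x, HasDerivAt d (-(k ^ 2) * u x) x)
    (p q : ℝ) (hdp : d p = 0) (huq : u q = 0) (hcos : Real.cos (k * (q - p)) ≠ 0) :
    ∀ x, u x = 0 := by
  set a := u p with ha
  have hw : ∀ x, HasDerivAt (fun y => u y - a * Real.cos (k * (y - p)))
      (d x - -(a * k) * Real.sin (k * (x - p))) x :=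
    fun x => (hu x).sub (cos_deriv k a p x)
  have he : ∀ x, HasDerivAt (fun y => d y - -(a * k) * Real.sin (k * (y - p)))
      (-(k ^ 2) * (u x - a * Real.cos (k * (x - p)))) x := by
    intro x
    have := (hd x).sub (sin_deriv k a p x)
    refine this.congr_deriv ?_
    ring
  have hz := uniq k hk _ _ hw he p (by simp [ha]) (by simp [hdp])
  have hrep : ∀ x, u x = a * Real.cos (k * (x - p)) := by
    intro x
    have := hz x
    linarith [this]
  have ha0 : a = 0 := by
    have := hrep q
    rw [huq] at this
    rcases mul_eq_zero.mp this.symm with h | h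
    · exact h
    · exact absurd h hcos
  intro x
  rw [hrep x, ha0, zero_mul]

/-- Two intervals `[0,ℓ₁]`, `[0,ℓ₂]` glued at an interior vertex `v`, with the
δ-condition of strength `t` at `v` and Neumann conditions at the outer ends.
Let `Λ` be the (1×1) two-sided Dirichlet-to-Neumann map at `v` for the
spectral parameter `c = k²` (not in the Dirichlet spectrum at `v`, i.e.
`cos(kℓᵢ) ≠ 0`): it sends the value `w` at `v` to the derivative jump
`u₁'(v) − u₂'(v)`. Then `-t` is an eigenvalue of `Λ` iff `c` is an eigenvalue
of `H(t)`. -/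
theorem delta_dtn_eigenvalue_correspondence (ℓ₁ ℓ₂ k t : ℝ)
    (h1 : 0 < ℓ₁) (h2 : 0 < ℓ₂) (hk : 0 < k)
    (hc1 : Real.cos (k * ℓ₁) ≠ 0) (hc2 : Real.cos (k * ℓ₂) ≠ 0)
    (Λ : ℝ)
    (hΛ : ∀ w : ℝ, ∀ u₁ u₂ d₁ d₂ : ℝ → ℝ,
      (∀ x, HasDerivAt u₁ (d₁ x) x) → (∀ x, HasDerivAt d₁ (-(k ^ 2) * u₁ x) x) →
      (∀ x, HasDerivAt u₂ (d₂ x) x) → (∀ x, HasDerivAt d₂ (-(k ^ 2) * u₂ x) x) →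
      d₁ 0 = 0 → d₂ ℓ₂ = 0 → u₁ ℓ₁ = w → u₂ 0 = w →
      Λ * w = d₁ ℓ₁ - d₂ 0) :
    Λ = -t ↔
      ∃ u₁ u₂ d₁ d₂ : ℝ → ℝ,
        (∀ x, HasDerivAt u₁ (d₁ x) x) ∧ (∀ x, HasDerivAt d₁ (-(k ^ 2) * u₁ x) x) ∧
        (∀ x, HasDerivAt u₂ (d₂ x) x) ∧ (∀ x, HasDerivAt d₂ (-(k ^ 2) * u₂ x) x) ∧
        d₁ 0 = 0 ∧ d₂ ℓ₂ = 0 ∧ u₁ ℓ₁ = u₂ 0 ∧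
        d₂ 0 - d₁ ℓ₁ = t * u₁ ℓ₁ ∧ (u₁ ≠ 0 ∨ u₂ ≠ 0) := by
  constructor
  · intro hΛt
    set c₂ : ℝ := Real.cos (k * ℓ₁) / Real.cos (k * ℓ₂) with hc₂
    refine ⟨fun x => 1 * Real.cos (k * (x - 0)), fun x => c₂ * Real.cos (k * (x - ℓ₂)),
      fun x => -(1 * k) * Real.sin (k * (x - 0)), fun x => -(c₂ * k) * Real.sin (k * (x - ℓ₂)),
      fun x => cos_deriv k 1 0 x, fun x => sin_deriv k 1 0 x,
      fun x => cos_deriv k c₂ ℓ₂ x, fun x => sin_deriv k c₂ ℓ₂ x,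
      by simp, by simp, ?_, ?_, ?_⟩
    · show 1 * Real.cos (k * (ℓ₁ - 0)) = c₂ * Real.cos (k * (0 - ℓ₂))
      rw [show k * (0 - ℓ₂) = -(k * ℓ₂) by ring, Real.cos_neg, hc₂,
        div_mul_cancel₀ _ hc2]
      norm_num
    · have key := hΛ (Real.cos (k * ℓ₁)) _ _ _ _
        (fun x => cos_deriv k 1 0 x) (fun x => sin_deriv k 1 0 x)
        (fun x => cos_deriv k c₂ ℓ₂ x) (fun x => sin_deriv k c₂ ℓ₂ x)
        (by simp) (by simp) (by simp) ?_
      · rw [hΛt] at key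
        simp only [sub_zero, one_mul] at key ⊢
        linarith [key]
      · show c₂ * Real.cos (k * (0 - ℓ₂)) = Real.cos (k * ℓ₁)
        rw [show k * (0 - ℓ₂) = -(k * ℓ₂) by ring, Real.cos_neg, hc₂,
          div_mul_cancel₀ _ hc2]
    · left
      intro h
      have := congrFun h ℓ₁
      simp at this
      exact hc1 this
  · rintro ⟨u₁, u₂, d₁, d₂, hu1, hd1, hu2, hd2, hn1, hn2, hglue, hjump, hnt⟩
    have key := hΛ (u₁ ℓ₁) u₁ u₂ d₁ d₂ hu1 hd1 hu2 hd2 hn1 hn2 rfl hglue.symm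
    have hw : u₁ ℓ₁ ≠ 0 := by
      intro h0
      rcases hnt with h | h
      · apply h
        funext x
        exact uniq2 k hk u₁ d₁ hu1 hd1 0 ℓ₁ hn1 h0 (by simpa using hc1) x
      · apply h
        funext x
        have h20 : u₂ 0 = 0 := by rw [← hglue, h0]
        refine uniq2 k hk u₂ d₂ hu2 hd2 ℓ₂ 0 hn2 h20 ?_ x
        rw [show k * (0 - ℓ₂) = -(k * ℓ₂) by ring, Real.cos_neg]
        exact hc2
    have : Λ * u₁ ℓ₁ = -t * u₁ ℓ₁ := by
      rw [key]
      linarith [hjump]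
    exact mul_right_cancel₀ hw this
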